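/- For integers ℓ ≥ 1, δ ≥ 1, k ≥ 1 with |K| = k, let g(x₁, …, x_{ℓk}) = ∑_i (x_i(δ + 3/2 − k) + k/2)/(k(δ + 2 − x_i)), defined for real x_i with x_i < δ + 2 and k ≤ δ + 3/2. If 1 ≤ x₁ ≤ x₂ ≤ δ, then g(x₁ − 1, x₂ + 1, x₃, …, x_{ℓk}) > g(x₁, …, x_{ℓk}). -/

import Mathlib

lemma two_term_aux (a B k u v : ℝ) (hk : 0 < k) (hB : 0 < B) (hv : 1 < v) (huv : v ≤ u) :
    (-a/k + B/(k*u)) + (-a/k + B/(k*v)) < (-a/k + B/(k*(u+1))) + (-a/k + B/(k*(v-1))) := by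
  have hv0 : 0 < v := by linarith
  have hv1 : 0 < v - 1 := by linarith
  have hu0 : 0 < u := by linarith
  have hu1 : 0 < u + 1 := by linarith
  have key : 1/u + 1/v < 1/(u+1) + 1/(v-1) := by
    have e1 : 1/(v-1) - 1/v = 1/(v*(v-1)) := by field_simp; ring
    have e2 : 1/u - 1/(u+1) = 1/(u*(u+1)) := by field_simp; ring
    have h3 : v*(v-1) < u*(u+1) := by nlinarith
    have h4 : 1/(u*(u+1)) < 1/(v*(v-1)) := by
      apply one_div_lt_one_div_of_lt (by positivity) h3
    linarith
  have e : ∀ w : ℝ, B/(k*w) = B/k * (1/w) := fun w => by rw [mul_one_div, div_div]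
  have hm : B/k * (1/u + 1/v) < B/k * (1/(u+1) + 1/(v-1)) :=
    mul_lt_mul_of_pos_left key (by positivity)
  rw [e, e, e, e]
  linarith [hm]

theorem stmt_17 (ℓ δ k : ℕ) (hℓ : 1 ≤ ℓ) (hδ : 1 ≤ δ) (hk : 1 ≤ k)
    (hkδ : (k : ℝ) < (δ : ℝ) + 3 / 2)
    (x : Fin (ℓ * k) → ℝ) (hx : ∀ i, x i < (δ : ℝ) + 2)
    (i j : Fin (ℓ * k)) (hij : i ≠ j)
    (h1 : 1 ≤ x i) (h12 : x i ≤ x j) (h2 : x j ≤ (δ : ℝ)) :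
    (∑ m, (x m * ((δ : ℝ) + 3 / 2 - k) + k / 2) / (k * ((δ : ℝ) + 2 - x m))) <
      ∑ m, ((Function.update (Function.update x i (x i - 1)) j (x j + 1)) m *
          ((δ : ℝ) + 3 / 2 - k) + k / 2) /
        (k * ((δ : ℝ) + 2 - (Function.update (Function.update x i (x i - 1)) j (x j + 1)) m)) := by
  set c : ℝ := (δ : ℝ) + 2 with hc
  set a : ℝ := (δ : ℝ) + 3/2 - k with ha
  set B : ℝ := ((δ : ℝ) + 3/2) * ((δ : ℝ) + 2 - k) with hB
  set y := Function.update (Function.update x i (x i - 1)) j (x j + 1) with hy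
  have hk0 : (0:ℝ) < k := by exact_mod_cast hk
  have hkd : (k:ℝ) ≤ (δ:ℝ) + 1 := by
    have h : (k:ℝ) < (δ:ℝ) + 2 := by linarith
    have h2 : k < δ + 2 := by exact_mod_cast h
    have h3 : k ≤ δ + 1 := by omega
    exact_mod_cast h3
  have hBpos : 0 < B := by
    rw [hB]; apply mul_pos <;> [positivity; linarith]
  have hyi : y i = x i - 1 := by
    rw [hy, Function.update_of_ne hij, Function.update_self]
  have hyj : y j = x j + 1 := by rw [hy, Function.update_self]
  have hym : ∀ m, m ≠ i → m ≠ j → y m = x m := fun m hmi hmj => by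
    rw [hy, Function.update_of_ne hmj, Function.update_of_ne hmi]
  -- each summand in the nice form
  have hG : ∀ t : ℝ, t < c → (t * a + k/2) / (k * (c - t)) = -a/k + B/(k*(c-t)) := by
    intro t ht
    have h1 : c - t ≠ 0 := by linarith
    have h2 : (k:ℝ) ≠ 0 := ne_of_gt hk0
    field_simp
    rw [hB, ha, hc]
    ring
  have hyt : ∀ m, y m < c := by
    intro m
    by_cases hmi : m = i
    · subst hmi; rw [hyi]; have := hx m; linarith
    by_cases hmj : m = j
    · subst hmj; rw [hyj]; rw [hc]; linarith
    · rw [hym m hmi hmj]; exact hx m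
  have hsum : ∑ m, ((y m * a + k/2) / (k * (c - y m)) - (x m * a + k/2) / (k * (c - x m)))
      = ((y i * a + k/2) / (k * (c - y i)) - (x i * a + k/2) / (k * (c - x i)))
      + ((y j * a + k/2) / (k * (c - y j)) - (x j * a + k/2) / (k * (c - x j))) := by
    apply Finset.sum_eq_add_of_mem i j (Finset.mem_univ i) (Finset.mem_univ j) hij
    intro m _ hm
    rw [hym m hm.1 hm.2]
    ring
  rw [← sub_pos, ← Finset.sum_sub_distrib, hsum]
  rw [hG _ (hyt i), hG _ (hyt j), hG _ (hx i), hG _ (hx j), hyi, hyj]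
  have hui : c - (x i - 1) = (c - x i) + 1 := by ring
  have huj : c - (x j + 1) = (c - x j) - 1 := by ring
  rw [hui, huj]
  have := two_term_aux a B k (c - x i) (c - x j) hk0 hBpos (by rw [hc]; linarith)
    (by linarith)
  linarith
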